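/- Let q and q' be nondegenerate quadratic forms on ℂ⁴ that are not proportional, and suppose the quadric surfaces Q = V(q) and Q' = V(q') in ℙ³ both contain two given skew lines R and R'. Then there exist lines S and S' in ℙ³ (possibly equal), each of which meets both R and R', such that Q ∩ Q' = R ∪ R' ∪ S ∪ S'. -/

import Mathlib

open Projectivization
open scoped LinearAlgebra.Projectivization

private lemma cross_prop {s0 s1 t0 t1 : ℂ} (hs : s0 ≠ 0 ∨ s1 ≠ 0)
    (h : s0 * t1 - s1 * t0 = 0) : ∃ μ : ℂ, t0 = μ * s0 ∧ t1 = μ * s1 := by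
  rcases hs with hs | hs
  · refine ⟨t0 / s0, by field_simp, ?_⟩
    field_simp
    linear_combination h
  · refine ⟨t1 / s1, ?_, by field_simp⟩
    field_simp
    linear_combination -h

private lemma perp_cross {y0 y1 s0 s1 t0 t1 : ℂ} (hy : y0 ≠ 0 ∨ y1 ≠ 0)
    (hs : y0 * s0 + y1 * s1 = 0) (ht : y0 * t0 + y1 * t1 = 0) :
    s0 * t1 - s1 * t0 = 0 := by
  rcases hy with hy | hy
  · have h2 : y0 * (s0 * t1 - s1 * t0) = 0 := by linear_combination t1 * hs - s1 * ht
    exact (mul_eq_zero.mp h2).resolve_left hy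
  · have h2 : y1 * (s0 * t1 - s1 * t0) = 0 := by linear_combination s0 * ht - t0 * hs
    exact (mul_eq_zero.mp h2).resolve_left hy

private lemma lin_zero {a1 b1 x y : ℂ} (h1 : a1 ≠ 0 ∨ b1 ≠ 0) (h : a1 * x + b1 * y = 0) :
    ∃ t : ℂ, x = t * b1 ∧ y = -(t * a1) := by
  rcases h1 with h1 | h1
  · refine ⟨-y / a1, ?_, by field_simp⟩
    field_simp
    linear_combination h
  · refine ⟨x / b1, by field_simp, ?_⟩
    field_simp
    linear_combination h

private lemma quad_factor {a b c : ℂ} (h : ¬(a = 0 ∧ b = 0 ∧ c = 0)) :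
    ∃ a1 b1 a2 b2 : ℂ, (a1 ≠ 0 ∨ b1 ≠ 0) ∧ (a2 ≠ 0 ∨ b2 ≠ 0) ∧
      ∀ x y : ℂ, a * x ^ 2 + b * x * y + c * y ^ 2 = (a1 * x + b1 * y) * (a2 * x + b2 * y) := by
  by_cases ha : a = 0
  · by_cases hb : b = 0
    · have hc : c ≠ 0 := fun hc => h ⟨ha, hb, hc⟩
      exact ⟨0, 1, 0, c, Or.inr one_ne_zero, Or.inr hc, fun x y => by subst ha hb; ring⟩
    · exact ⟨0, 1, b, c, Or.inr one_ne_zero, Or.inl hb, fun x y => by subst ha; ring⟩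
  · obtain ⟨d, hd⟩ : ∃ d : ℂ, d ^ 2 = b ^ 2 - 4 * a * c :=
      IsAlgClosed.exists_pow_nat_eq (b ^ 2 - 4 * a * c) two_pos
    refine ⟨a, -((-b + d) / 2), 1, -((-b - d) / (2 * a)), Or.inl ha, Or.inl one_ne_zero,
      fun x y => ?_⟩
    field_simp
    ring_nf
    linear_combination y ^ 2 * hd

private lemma polar_vanish {Q : QuadraticForm ℂ (Fin 4 → ℂ)} {W : Submodule ℂ (Fin 4 → ℂ)}
    (h : ∀ v ∈ W, Q v = 0) {u z : Fin 4 → ℂ} (hu : u ∈ W) (hz : z ∈ W) :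
    QuadraticMap.polar Q u z = 0 := by
  simp [QuadraticMap.polar, h _ (add_mem hu hz), h _ hu, h _ hz]

theorem quadric_intersection_eq_four_lines
    (q q' : QuadraticForm ℂ (Fin 4 → ℂ))
    (hq : ∀ v : Fin 4 → ℂ, (∀ w, QuadraticMap.polar q v w = 0) → v = 0)
    (hq' : ∀ v : Fin 4 → ℂ, (∀ w, QuadraticMap.polar q' v w = 0) → v = 0)
    (hprop : ∀ c : ℂ, q' ≠ c • q)
    (U U' : Submodule ℂ (Fin 4 → ℂ))
    (hU : Module.finrank ℂ U = 2) (hU' : Module.finrank ℂ U' = 2)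
    (hskew : U ⊓ U' = ⊥)
    (hUq : ∀ v ∈ U, q v = 0) (hUq' : ∀ v ∈ U, q' v = 0)
    (hU'q : ∀ v ∈ U', q v = 0) (hU'q' : ∀ v ∈ U', q' v = 0) :
    ∃ S S' : Submodule ℂ (Fin 4 → ℂ),
      Module.finrank ℂ S = 2 ∧ Module.finrank ℂ S' = 2 ∧
      S ⊓ U ≠ ⊥ ∧ S ⊓ U' ≠ ⊥ ∧ S' ⊓ U ≠ ⊥ ∧ S' ⊓ U' ≠ ⊥ ∧
      {p : ℙ ℂ (Fin 4 → ℂ) | (∀ v ∈ p.submodule, q v = 0) ∧ ∀ v ∈ p.submodule, q' v = 0}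
        = {p : ℙ ℂ (Fin 4 → ℂ) | p.submodule ≤ U} ∪ {p | p.submodule ≤ U'}
          ∪ {p | p.submodule ≤ S} ∪ {p | p.submodule ≤ S'} := by
  classical
  -- the two skew lines span everything
  have hsup : U ⊔ U' = ⊤ := by
    apply Submodule.eq_top_of_finrank_eq
    have h := Submodule.finrank_sup_add_finrank_inf_eq U U'
    rw [hskew] at h
    simp [hU, hU'] at h
    have h4 : Module.finrank ℂ (Fin 4 → ℂ) = 4 := by simp
    omega
  -- bases of U and U'
  let bU : Module.Basis (Fin 2) ℂ U := Module.finBasisOfFinrankEq ℂ U hU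
  let bU' : Module.Basis (Fin 2) ℂ U' := Module.finBasisOfFinrankEq ℂ U' hU'
  set w : Fin 2 → (Fin 4 → ℂ) := fun i => (bU i : Fin 4 → ℂ) with hw
  set w' : Fin 2 → (Fin 4 → ℂ) := fun i => (bU' i : Fin 4 → ℂ) with hw'
  have hwU : ∀ i, w i ∈ U := fun i => (bU i).2
  have hwU' : ∀ i, w' i ∈ U' := fun i => (bU' i).2
  -- decomposition of an arbitrary vector
  have hdec : ∀ v : Fin 4 → ℂ, ∃ y0 y1 x0 x1 : ℂ,
      v = (y0 • w 0 + y1 • w 1) + (x0 • w' 0 + x1 • w' 1) := by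
    intro v
    have hv : v ∈ U ⊔ U' := hsup ▸ Submodule.mem_top
    obtain ⟨u, hu, u', hu', rfl⟩ := Submodule.mem_sup.mp hv
    refine ⟨bU.repr ⟨u, hu⟩ 0, bU.repr ⟨u, hu⟩ 1, bU'.repr ⟨u', hu'⟩ 0, bU'.repr ⟨u', hu'⟩ 1, ?_⟩
    have h1 := bU.sum_repr ⟨u, hu⟩
    have h2 := bU'.sum_repr ⟨u', hu'⟩
    rw [Fin.sum_univ_two] at h1 h2
    have h1' := congrArg (Subtype.val) h1
    have h2' := congrArg (Subtype.val) h2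
    push_cast at h1' h2'
    rw [h1', h2']
  -- linear independence of the basis vectors
  have hwind : ∀ g0 g1 : ℂ, g0 • w 0 + g1 • w 1 = 0 → g0 = 0 ∧ g1 = 0 := by
    intro g0 g1 hg
    have h0 : (g0 • bU 0 + g1 • bU 1 : U) = 0 := by
      apply Subtype.ext
      push_cast
      exact hg
    have h1 := Fintype.linearIndependent_iff.mp bU.linearIndependent ![g0, g1] ?_
    · exact ⟨h1 0, h1 1⟩
    · rw [Fin.sum_univ_two]
      simpa only [Matrix.cons_val_zero, Matrix.cons_val_one, Matrix.head_cons] using h0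
  have hw'ind : ∀ g0 g1 : ℂ, g0 • w' 0 + g1 • w' 1 = 0 → g0 = 0 ∧ g1 = 0 := by
    intro g0 g1 hg
    have h0 : (g0 • bU' 0 + g1 • bU' 1 : U') = 0 := by
      apply Subtype.ext
      push_cast
      exact hg
    have h1 := Fintype.linearIndependent_iff.mp bU'.linearIndependent ![g0, g1] ?_
    · exact ⟨h1 0, h1 1⟩
    · rw [Fin.sum_univ_two]
      simpa only [Matrix.cons_val_zero, Matrix.cons_val_one, Matrix.head_cons] using h0
  -- evaluation of a vanishing form on a decomposed vector
  have heval : ∀ (r : QuadraticForm ℂ (Fin 4 → ℂ)), (∀ v ∈ U, r v = 0) → (∀ v ∈ U', r v = 0) →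
      ∀ y0 y1 x0 x1 : ℂ,
      r ((y0 • w 0 + y1 • w 1) + (x0 • w' 0 + x1 • w' 1)) =
        y0 * (x0 * QuadraticMap.polar r (w 0) (w' 0) + x1 * QuadraticMap.polar r (w 0) (w' 1))
      + y1 * (x0 * QuadraticMap.polar r (w 1) (w' 0) + x1 * QuadraticMap.polar r (w 1) (w' 1)) := by
    intro r hrU hrU' y0 y1 x0 x1
    have hu : y0 • w 0 + y1 • w 1 ∈ U := add_mem (U.smul_mem _ (hwU 0)) (U.smul_mem _ (hwU 1))
    have hu' : x0 • w' 0 + x1 • w' 1 ∈ U' :=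
      add_mem (U'.smul_mem _ (hwU' 0)) (U'.smul_mem _ (hwU' 1))
    have h1 : r ((y0 • w 0 + y1 • w 1) + (x0 • w' 0 + x1 • w' 1))
        = QuadraticMap.polar r (y0 • w 0 + y1 • w 1) (x0 • w' 0 + x1 • w' 1)
          + r (y0 • w 0 + y1 • w 1) + r (x0 • w' 0 + x1 • w' 1) := by
      rw [QuadraticMap.polar]; ring
    rw [h1, hrU _ hu, hrU' _ hu']
    simp only [QuadraticMap.polar_add_left, QuadraticMap.polar_smul_left,
      QuadraticMap.polar_add_right, QuadraticMap.polar_smul_right, smul_eq_mul]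
    ring
  -- nondegeneracy of the pairing between U and U'
  have hPnd : ∀ x0 x1 : ℂ,
      QuadraticMap.polar q (w 0) (w' 0) * x0 + QuadraticMap.polar q (w 0) (w' 1) * x1 = 0 →
      QuadraticMap.polar q (w 1) (w' 0) * x0 + QuadraticMap.polar q (w 1) (w' 1) * x1 = 0 →
      x0 = 0 ∧ x1 = 0 := by
    intro x0 x1 h0 h1
    have hu' : x0 • w' 0 + x1 • w' 1 ∈ U' :=
      add_mem (U'.smul_mem _ (hwU' 0)) (U'.smul_mem _ (hwU' 1))
    have e1 : QuadraticMap.polar q (w 0) (x0 • w' 0 + x1 • w' 1) = 0 := by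
      simp only [QuadraticMap.polar_add_right, QuadraticMap.polar_smul_right, smul_eq_mul]
      linear_combination h0
    have e2 : QuadraticMap.polar q (w 1) (x0 • w' 0 + x1 • w' 1) = 0 := by
      simp only [QuadraticMap.polar_add_right, QuadraticMap.polar_smul_right, smul_eq_mul]
      linear_combination h1
    have hz : x0 • w' 0 + x1 • w' 1 = 0 := by
      apply hq
      intro z
      obtain ⟨z0, z1, t0, t1, rfl⟩ := hdec z
      have hzu' : t0 • w' 0 + t1 • w' 1 ∈ U' :=
        add_mem (U'.smul_mem _ (hwU' 0)) (U'.smul_mem _ (hwU' 1))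
      rw [QuadraticMap.polar_add_right q, polar_vanish hU'q hu' hzu',
        QuadraticMap.polar_comm, QuadraticMap.polar_add_left,
        QuadraticMap.polar_smul_left, QuadraticMap.polar_smul_left, e1, e2]
      simp
    exact hw'ind _ _ hz
  have hevq := heval q hUq hU'q
  have hevq' := heval q' hUq' hU'q'
  set P00 := QuadraticMap.polar q (w 0) (w' 0) with hP00def
  set P01 := QuadraticMap.polar q (w 0) (w' 1) with hP01def
  set P10 := QuadraticMap.polar q (w 1) (w' 0) with hP10def
  set P11 := QuadraticMap.polar q (w 1) (w' 1) with hP11def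
  set Q00 := QuadraticMap.polar q' (w 0) (w' 0) with hQ00def
  set Q01 := QuadraticMap.polar q' (w 0) (w' 1) with hQ01def
  set Q10 := QuadraticMap.polar q' (w 1) (w' 0) with hQ10def
  set Q11 := QuadraticMap.polar q' (w 1) (w' 1) with hQ11def
  -- the coefficients of the binary quadratic are not all zero
  have habc : ¬(P00*Q10 - P10*Q00 = 0 ∧ P00*Q11 + P01*Q10 - P10*Q01 - P11*Q00 = 0 ∧
      P01*Q11 - P11*Q01 = 0) := by
    rintro ⟨ha, hb, hc⟩
    have hc0 : P00 ≠ 0 ∨ P10 ≠ 0 := by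
      by_contra hcon
      push_neg at hcon
      obtain ⟨h1, -⟩ := hPnd 1 0 (by rw [hcon.1]; ring) (by rw [hcon.2]; ring)
      exact one_ne_zero h1
    have hc1 : P01 ≠ 0 ∨ P11 ≠ 0 := by
      by_contra hcon
      push_neg at hcon
      obtain ⟨-, h2⟩ := hPnd 0 1 (by rw [hcon.1]; ring) (by rw [hcon.2]; ring)
      exact one_ne_zero h2
    obtain ⟨mu0, hmu00, hmu01⟩ := cross_prop hc0 ha
    obtain ⟨mu1, hmu10, hmu11⟩ := cross_prop hc1 hc
    have hcross : P00*P11 - P10*P01 ≠ 0 := by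
      intro h0
      obtain ⟨nu, hnu0, hnu1⟩ := cross_prop hc0 h0
      obtain ⟨-, e2⟩ := hPnd nu (-1) (by rw [hnu0]; ring) (by rw [hnu1]; ring)
      norm_num at e2
    have hmueq : mu1 = mu0 := by
      rw [hmu00, hmu01, hmu10, hmu11] at hb
      have h2 : (mu1 - mu0) * (P00*P11 - P10*P01) = 0 := by linear_combination hb
      rcases mul_eq_zero.mp h2 with h3 | h3
      · exact sub_eq_zero.mp h3
      · exact absurd h3 hcross
    apply hprop mu0
    apply QuadraticMap.ext
    intro v
    obtain ⟨y0, y1, x0, x1, rfl⟩ := hdec v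
    rw [QuadraticMap.smul_apply, hevq', hevq, hmu00, hmu01, hmu10, hmu11, hmueq, smul_eq_mul]
    ring
  obtain ⟨A1, B1, A2, B2, hAB1, hAB2, hfac⟩ := quad_factor habc
  have hcrossfac : ∀ x0 x1 : ℂ,
      (P00*x0 + P01*x1) * (Q10*x0 + Q11*x1) - (P10*x0 + P11*x1) * (Q00*x0 + Q01*x1)
        = (A1*x0 + B1*x1) * (A2*x0 + B2*x1) := by
    intro x0 x1
    rw [← hfac x0 x1]
    ring
  -- the two extra lines
  set p10 := P00 * B1 - P01 * A1 with hp10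
  set p11 := P10 * B1 - P11 * A1 with hp11
  set p20 := P00 * B2 - P01 * A2 with hp20
  set p21 := P10 * B2 - P11 * A2 with hp21
  have hz1 : (P00*B1 + P01*(-A1)) * (Q10*B1 + Q11*(-A1))
      - (P10*B1 + P11*(-A1)) * (Q00*B1 + Q01*(-A1)) = 0 := by
    rw [hcrossfac]; ring
  have hz2 : (P00*B2 + P01*(-A2)) * (Q10*B2 + Q11*(-A2))
      - (P10*B2 + P11*(-A2)) * (Q00*B2 + Q01*(-A2)) = 0 := by
    rw [hcrossfac]; ring
  have hPx1ne : p10 ≠ 0 ∨ p11 ≠ 0 := by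
    by_contra hcon
    push_neg at hcon
    obtain ⟨h1, h2⟩ := hPnd B1 (-A1) (by rw [hp10] at hcon; linear_combination hcon.1)
      (by rw [hp11] at hcon; linear_combination hcon.2)
    rcases hAB1 with h | h
    · exact h (neg_eq_zero.mp h2)
    · exact h h1
  have hPx2ne : p20 ≠ 0 ∨ p21 ≠ 0 := by
    by_contra hcon
    push_neg at hcon
    obtain ⟨h1, h2⟩ := hPnd B2 (-A2) (by rw [hp20] at hcon; linear_combination hcon.1)
      (by rw [hp21] at hcon; linear_combination hcon.2)
    rcases hAB2 with h | h
    · exact h (neg_eq_zero.mp h2)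
    · exact h h1
  set sv1 : Fin 4 → ℂ := p11 • w 0 + (-p10) • w 1 with hsv1def
  set sv1' : Fin 4 → ℂ := B1 • w' 0 + (-A1) • w' 1 with hsv1'def
  set sv2 : Fin 4 → ℂ := p21 • w 0 + (-p20) • w 1 with hsv2def
  set sv2' : Fin 4 → ℂ := B2 • w' 0 + (-A2) • w' 1 with hsv2'def
  have hsv1U : sv1 ∈ U := add_mem (U.smul_mem _ (hwU 0)) (U.smul_mem _ (hwU 1))
  have hsv2U : sv2 ∈ U := add_mem (U.smul_mem _ (hwU 0)) (U.smul_mem _ (hwU 1))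
  have hsv1U' : sv1' ∈ U' := add_mem (U'.smul_mem _ (hwU' 0)) (U'.smul_mem _ (hwU' 1))
  have hsv2U' : sv2' ∈ U' := add_mem (U'.smul_mem _ (hwU' 0)) (U'.smul_mem _ (hwU' 1))
  have hsv1ne : sv1 ≠ 0 := by
    intro h
    obtain ⟨e1, e2⟩ := hwind _ _ h
    rcases hPx1ne with h' | h'
    · exact h' (neg_eq_zero.mp e2)
    · exact h' e1
  have hsv2ne : sv2 ≠ 0 := by
    intro h
    obtain ⟨e1, e2⟩ := hwind _ _ h
    rcases hPx2ne with h' | h'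
    · exact h' (neg_eq_zero.mp e2)
    · exact h' e1
  have hsv1'ne : sv1' ≠ 0 := by
    intro h
    obtain ⟨e1, e2⟩ := hw'ind _ _ h
    rcases hAB1 with h' | h'
    · exact h' (neg_eq_zero.mp e2)
    · exact h' e1
  have hsv2'ne : sv2' ≠ 0 := by
    intro h
    obtain ⟨e1, e2⟩ := hw'ind _ _ h
    rcases hAB2 with h' | h'
    · exact h' (neg_eq_zero.mp e2)
    · exact h' e1
  -- rank of the spans
  have hrank : ∀ v1 v2 : Fin 4 → ℂ, v1 ∈ U → v2 ∈ U' → v1 ≠ 0 → v2 ≠ 0 →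
      Module.finrank ℂ (Submodule.span ℂ {v1, v2} : Submodule ℂ (Fin 4 → ℂ)) = 2 := by
    intro v1 v2 hv1 hv2 hv1ne hv2ne
    have hind : LinearIndependent ℂ ![v1, v2] := by
      rw [LinearIndependent.pair_iff]
      intro s t hst
      have hmem : s • v1 ∈ U ⊓ U' := by
        refine ⟨U.smul_mem _ hv1, ?_⟩
        have : s • v1 = -(t • v2) := by
          rw [eq_neg_iff_add_eq_zero]; exact hst
        rw [this]
        exact neg_mem (U'.smul_mem _ hv2)
      rw [hskew, Submodule.mem_bot] at hmem
      have hs : s = 0 := by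
        rcases smul_eq_zero.mp hmem with h | h
        · exact h
        · exact absurd h hv1ne
      refine ⟨hs, ?_⟩
      rw [hs, zero_smul, zero_add] at hst
      rcases smul_eq_zero.mp hst with h | h
      · exact h
      · exact absurd h hv2ne
    have hset : ({v1, v2} : Set (Fin 4 → ℂ)) = Set.range ![v1, v2] := by
      ext x
      simp [Fin.exists_fin_two, eq_comm, or_comm]
    rw [hset, finrank_span_eq_card hind]
    simp
  refine ⟨Submodule.span ℂ {sv1, sv1'}, Submodule.span ℂ {sv2, sv2'},
    hrank _ _ hsv1U hsv1U' hsv1ne hsv1'ne, hrank _ _ hsv2U hsv2U' hsv2ne hsv2'ne,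
    ?_, ?_, ?_, ?_, ?_⟩
  · rw [Submodule.ne_bot_iff]
    exact ⟨sv1, ⟨Submodule.subset_span (by simp), hsv1U⟩, hsv1ne⟩
  · rw [Submodule.ne_bot_iff]
    exact ⟨sv1', ⟨Submodule.subset_span (by simp), hsv1U'⟩, hsv1'ne⟩
  · rw [Submodule.ne_bot_iff]
    exact ⟨sv2, ⟨Submodule.subset_span (by simp), hsv2U⟩, hsv2ne⟩
  · rw [Submodule.ne_bot_iff]
    exact ⟨sv2', ⟨Submodule.subset_span (by simp), hsv2U'⟩, hsv2'ne⟩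
  -- the set-theoretic identity
  ext p
  induction p using Projectivization.ind with | h v hv => ?_
  simp only [Set.mem_setOf_eq, Set.mem_union, Projectivization.submodule_mk]
  have hqiff : ∀ r : QuadraticForm ℂ (Fin 4 → ℂ), (∀ u ∈ (ℂ ∙ v), r u = 0) ↔ r v = 0 := by
    intro r
    constructor
    · intro h
      exact h v (Submodule.mem_span_singleton_self v)
    · intro h u hu
      obtain ⟨c, rfl⟩ := Submodule.mem_span_singleton.mp hu
      rw [QuadraticMap.map_smul, h]
      simp
  rw [hqiff q, hqiff q', Submodule.span_singleton_le_iff_mem,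
    Submodule.span_singleton_le_iff_mem, Submodule.span_singleton_le_iff_mem,
    Submodule.span_singleton_le_iff_mem]
  constructor
  · rintro ⟨h1, h2⟩
    obtain ⟨y0, y1, x0, x1, rfl⟩ := hdec v
    by_cases hx : x0 = 0 ∧ x1 = 0
    · refine Or.inl (Or.inl (Or.inl ?_))
      rw [hx.1, hx.2]
      simp only [zero_smul, add_zero]
      exact add_mem (U.smul_mem _ (hwU 0)) (U.smul_mem _ (hwU 1))
    by_cases hy : y0 = 0 ∧ y1 = 0
    · refine Or.inl (Or.inl (Or.inr ?_))
      rw [hy.1, hy.2]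
      simp only [zero_smul, add_zero, zero_add]
      exact add_mem (U'.smul_mem _ (hwU' 0)) (U'.smul_mem _ (hwU' 1))
    rw [not_and_or] at hx hy
    rw [hevq] at h1
    rw [hevq'] at h2
    have hpc := perp_cross hy h1 h2
    have hcz : (A1*x0 + B1*x1) * (A2*x0 + B2*x1) = 0 := by
      rw [← hcrossfac x0 x1]
      linear_combination hpc
    rcases mul_eq_zero.mp hcz with hfz | hfz
    · obtain ⟨t, hx0, hx1⟩ := lin_zero hAB1 hfz
      have ht0 : t ≠ 0 := by
        rintro rfl
        simp only [zero_mul, neg_zero] at hx0 hx1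
        rcases hx with h | h
        · exact h hx0
        · exact h hx1
      have h3 : t * (y0 * p10 + y1 * p11) = 0 := by
        rw [hp10, hp11]
        linear_combination h1 - (y0*P00 + y1*P10)*hx0 - (y0*P01 + y1*P11)*hx1
      have hyp : y0 * p10 + y1 * p11 = 0 := by
        rcases mul_eq_zero.mp h3 with h | h
        · exact absurd h ht0
        · exact h
      have hsne : p11 ≠ 0 ∨ -p10 ≠ 0 := by
        rcases hPx1ne with h | h
        · exact Or.inr (neg_ne_zero.mpr h)
        · exact Or.inl h
      obtain ⟨mu, hy0eq, hy1eq⟩ := cross_prop (t0 := y0) (t1 := y1) hsne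
        (by linear_combination hyp)
      refine Or.inl (Or.inr ?_)
      apply Submodule.mem_span_pair.mpr
      refine ⟨mu, t, ?_⟩
      rw [hsv1def, hsv1'def, hy0eq, hy1eq, hx0, hx1]
      module
    · obtain ⟨t, hx0, hx1⟩ := lin_zero hAB2 hfz
      have ht0 : t ≠ 0 := by
        rintro rfl
        simp only [zero_mul, neg_zero] at hx0 hx1
        rcases hx with h | h
        · exact h hx0
        · exact h hx1
      have h3 : t * (y0 * p20 + y1 * p21) = 0 := by
        rw [hp20, hp21]
        linear_combination h1 - (y0*P00 + y1*P10)*hx0 - (y0*P01 + y1*P11)*hx1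
      have hyp : y0 * p20 + y1 * p21 = 0 := by
        rcases mul_eq_zero.mp h3 with h | h
        · exact absurd h ht0
        · exact h
      have hsne : p21 ≠ 0 ∨ -p20 ≠ 0 := by
        rcases hPx2ne with h | h
        · exact Or.inr (neg_ne_zero.mpr h)
        · exact Or.inl h
      obtain ⟨mu, hy0eq, hy1eq⟩ := cross_prop (t0 := y0) (t1 := y1) hsne
        (by linear_combination hyp)
      refine Or.inr ?_
      apply Submodule.mem_span_pair.mpr
      refine ⟨mu, t, ?_⟩
      rw [hsv2def, hsv2'def, hy0eq, hy1eq, hx0, hx1]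
      module
  · rintro (((hm | hm) | hm) | hm)
    · exact ⟨hUq v hm, hUq' v hm⟩
    · exact ⟨hU'q v hm, hU'q' v hm⟩
    · obtain ⟨m, n, hmn⟩ := Submodule.mem_span_pair.mp hm
      rw [← hmn]
      have hre : m • sv1 + n • sv1'
          = ((m*p11) • w 0 + (m*(-p10)) • w 1) + ((n*B1) • w' 0 + (n*(-A1)) • w' 1) := by
        rw [hsv1def, hsv1'def]
        module
      rw [hre, hevq, hevq']
      constructor
      · rw [hp10, hp11]; ring
      · rw [hp10, hp11]
        linear_combination (-(m*n)) * hz1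
    · obtain ⟨m, n, hmn⟩ := Submodule.mem_span_pair.mp hm
      rw [← hmn]
      have hre : m • sv2 + n • sv2'
          = ((m*p21) • w 0 + (m*(-p20)) • w 1) + ((n*B2) • w' 0 + (n*(-A2)) • w' 1) := by
        rw [hsv2def, hsv2'def]
        module
      rw [hre, hevq, hevq']
      constructor
      · rw [hp20, hp21]; ring
      · rw [hp20, hp21]
        linear_combination (-(m*n)) * hz2
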